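/- Let N ≥ 1, b₁, …, b_N ∈ ℝ, let V : (0,∞)^N → ℝ be differentiable, and let q, q' ∈ (0,∞)^N, p, p' ∈ ℝ^N satisfy bₖ ≤ qₖ²·q'ₖ² and the update equations q'ₖ·√(1 − bₖ/(qₖ²·q'ₖ²)) + pₖ = ∂V/∂qₖ(q) and p'ₖ = qₖ·√(1 − bₖ/(qₖ²·q'ₖ²)) for each k = 1, …, N. Then, with J₊(q,p) = Σₖ (pₖ² + bₖ/qₖ²), J₋(q,p) = Σₖ qₖ², J₃(q,p) = Σₖ qₖ·pₖ, the updated values satisfy: J₊(q',p') = J₋(q,p); J₋(q',p') = J₊(q,p) − 2·Σₖ pₖ·∂V/∂qₖ(q) + Σₖ (∂V/∂qₖ(q))²; and J₃(q',p') = −J₃(q,p) + Σₖ qₖ·∂V/∂qₖ(q). -/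
import Mathlib


open Finset

theorem sl2_generator_evolution (N : ℕ) (hN : 1 ≤ N) (b : Fin N → ℝ)
    (V : (Fin N → ℝ) → ℝ)
    (hV : ∀ q : Fin N → ℝ, (∀ k, 0 < q k) → DifferentiableAt ℝ V q)
    (q q' p p' : Fin N → ℝ)
    (hq : ∀ k, 0 < q k) (hq' : ∀ k, 0 < q' k)
    (hb : ∀ k, b k ≤ (q k) ^ 2 * (q' k) ^ 2)
    (hup1 : ∀ k, q' k * Real.sqrt (1 - b k / ((q k) ^ 2 * (q' k) ^ 2)) + p k
        = fderiv ℝ V q (Pi.single k 1))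
    (hup2 : ∀ k, p' k = q k * Real.sqrt (1 - b k / ((q k) ^ 2 * (q' k) ^ 2))) :
    (∑ k, ((p' k) ^ 2 + b k / (q' k) ^ 2) = ∑ k, (q k) ^ 2)
    ∧ (∑ k, (q' k) ^ 2
        = (∑ k, ((p k) ^ 2 + b k / (q k) ^ 2))
          - 2 * ∑ k, p k * fderiv ℝ V q (Pi.single k 1)
          + ∑ k, (fderiv ℝ V q (Pi.single k 1)) ^ 2)
    ∧ (∑ k, q' k * p' k
        = -(∑ k, q k * p k) + ∑ k, q k * fderiv ℝ V q (Pi.single k 1)) := by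
  have hsq : ∀ k, (Real.sqrt (1 - b k / ((q k) ^ 2 * (q' k) ^ 2))) ^ 2
      = 1 - b k / ((q k) ^ 2 * (q' k) ^ 2) := by
    intro k
    apply Real.sq_sqrt
    have hpos : 0 < (q k) ^ 2 * (q' k) ^ 2 :=
      mul_pos (pow_pos (hq k) 2) (pow_pos (hq' k) 2)
    have := (div_le_one hpos).mpr (hb k)
    linarith
  have hq2 : ∀ k, (q k) ^ 2 ≠ 0 := fun k => pow_ne_zero 2 (hq k).ne'
  have hq'2 : ∀ k, (q' k) ^ 2 ≠ 0 := fun k => pow_ne_zero 2 (hq' k).ne'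
  have hba : ∀ k, b k / (q k) ^ 2 = (q' k) ^ 2 * (b k / ((q k) ^ 2 * (q' k) ^ 2)) := by
    intro k
    rw [mul_div_assoc', mul_comm ((q' k) ^ 2) (b k), mul_div_mul_right _ _ (hq'2 k)]
  have hbb : ∀ k, b k / (q' k) ^ 2 = (q k) ^ 2 * (b k / ((q k) ^ 2 * (q' k) ^ 2)) := by
    intro k
    rw [mul_div_assoc', mul_div_mul_left _ _ (hq2 k)]
  refine ⟨?_, ?_, ?_⟩
  · apply Finset.sum_congr rfl
    intro k _
    rw [hup2 k, mul_pow, hsq k, hbb k]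
    ring
  · have h1 : ∑ k, (q' k) ^ 2
        = ∑ k, ((p k) ^ 2 + b k / (q k) ^ 2
            - 2 * (p k * fderiv ℝ V q (Pi.single k 1))
            + (fderiv ℝ V q (Pi.single k 1)) ^ 2) := by
      apply Finset.sum_congr rfl
      intro k _
      have h := hup1 k
      have h2 : (q' k) ^ 2 * (Real.sqrt (1 - b k / ((q k) ^ 2 * (q' k) ^ 2))) ^ 2
          = (fderiv ℝ V q (Pi.single k 1) - p k) ^ 2 := by
        rw [← mul_pow]; rw [show q' k * Real.sqrt (1 - b k / ((q k) ^ 2 * (q' k) ^ 2))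
          = fderiv ℝ V q (Pi.single k 1) - p k by linarith]
      rw [hsq k] at h2
      rw [hba k]
      nlinarith [h2]
    rw [h1]
    rw [Finset.sum_add_distrib, Finset.sum_sub_distrib, ← Finset.mul_sum]
  · have h1 : ∑ k, q' k * p' k
        = ∑ k, (q k * fderiv ℝ V q (Pi.single k 1) - q k * p k) := by
      apply Finset.sum_congr rfl
      intro k _
      have h : q' k * Real.sqrt (1 - b k / ((q k) ^ 2 * (q' k) ^ 2))
          = fderiv ℝ V q (Pi.single k 1) - p k := by linarith [hup1 k]
      rw [hup2 k, show q' k * (q k * Real.sqrt (1 - b k / ((q k) ^ 2 * (q' k) ^ 2)))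
          = q k * (q' k * Real.sqrt (1 - b k / ((q k) ^ 2 * (q' k) ^ 2))) from by ring, h]
      ring
    rw [h1, Finset.sum_sub_distrib]
    ring
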